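/- arXiv:1105.3793 — 8 statements merged into one kernel-verified Lean document; each statement's English description precedes it below -/
import Mathlib

section
/- Let q be a prime power, n ≥ 1, and f : F_q^n → F_q^n an arbitrary function. For k ∈ F_q^n define g_k(x) := f(x) + (k_1 x_1, ..., k_n x_n). If A is uniformly distributed on F_q^n, then the average over k ∈ F_q^n of the collision probability of g_k(A) is at most (1/q^n)·(2 - 1/q)^n. -/
open Finset

/-- Probability mass of value `y` under the pushforward of the uniform
distribution on `α` along `g`. -/
noncomputable def mass {α β : Type*} [Fintype α] [DecidableEq β]
    (g : α → β) (y : β) : ℝ :=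
  (Finset.univ.filter (fun x => g x = y)).card / (Fintype.card α : ℝ)

/-- Collision probability of `g(A)` for `A` uniform on `α`. -/
noncomputable def collProb {α β : Type*} [Fintype α] [Fintype β] [DecidableEq β]
    (g : α → β) : ℝ :=
  ∑ y, (mass g y) ^ 2

/-- Shannon entropy (base 2) of `g(A)` for `A` uniform on `α`.
(Terms with zero mass contribute `0` since `Real.logb 2 0 = 0`.) -/
noncomputable def shannon {α β : Type*} [Fintype α] [Fintype β] [DecidableEq β]
    (g : α → β) : ℝ :=
  -∑ y, mass g y * Real.logb 2 (mass g y)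

/-- Rényi entropy (base 2) of `g(A)` for `A` uniform on `α`. -/
noncomputable def renyi2 {α β : Type*} [Fintype α] [Fintype β] [DecidableEq β]
    (g : α → β) : ℝ :=
  -Real.logb 2 (collProb g)


lemma pair_count {α β : Type*} [Fintype α] [Fintype β] [DecidableEq β] (g : α → β) :
    (univ.filter fun p : α × α => g p.1 = g p.2).card
      = ∑ y, (univ.filter fun x => g x = y).card ^ 2 := by
  classical
  rw [Finset.card_eq_sum_card_fiberwise (f := fun p : α × α => g p.1) (t := univ)
      (fun _ _ => mem_univ _)]
  refine Finset.sum_congr rfl fun y _ => ?_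
  rw [Finset.filter_filter, sq, ← Finset.card_product]
  congr 1
  ext p
  simp only [mem_filter, mem_product, mem_univ, true_and]
  constructor
  · rintro ⟨h1, h2⟩; exact ⟨h2, h1 ▸ h2⟩
  · rintro ⟨h1, h2⟩; exact ⟨h1.trans h2.symm, h1⟩

lemma collProb_eq {α β : Type*} [Fintype α] [Fintype β] [DecidableEq β] (g : α → β) :
    collProb g = ((univ.filter fun p : α × α => g p.1 = g p.2).card : ℝ)
      / (Fintype.card α : ℝ) ^ 2 := by
  unfold collProb mass
  rw [pair_count]
  push_cast
  rw [Finset.sum_div]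
  exact Finset.sum_congr rfl fun y _ => by rw [div_pow]

lemma sum_ite_row {F : Type*} [Fintype F] [DecidableEq F] (q : ℕ) (hq0 : 0 < q)
    (hq : Fintype.card F = q) (a : F) :
    ∑ b : F, (if a = b then q else 1) = q + (q - 1) := by
  calc ∑ b : F, (if a = b then q else 1)
      = ∑ b : F, ((if a = b then q - 1 else 0) + 1) :=
        Finset.sum_congr rfl fun b _ => by split <;> omega
    _ = (∑ b : F, if a = b then q - 1 else 0) + ∑ _b : F, 1 :=
        Finset.sum_add_distrib
    _ = q + (q - 1) := by
        rw [Finset.sum_ite_eq, Finset.sum_const]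
        simp [hq, Nat.add_comm]

theorem stmt0 (q n : ℕ) (hn : 1 ≤ n) (F : Type*) [Field F] [Fintype F] [DecidableEq F]
    (hq : Fintype.card F = q) (f : (Fin n → F) → (Fin n → F)) :
    (1 / (q : ℝ) ^ n) *
        ∑ k : Fin n → F, collProb (fun x i => f x i + k i * x i) ≤
      (1 / (q : ℝ) ^ n) * (2 - 1 / (q : ℝ)) ^ n := by
  classical
  have hq0 : 0 < q := by rw [← hq]; exact Fintype.card_pos
  have hQ : Fintype.card (Fin n → F) = q ^ n := by
    simp [Fintype.card_fun, hq]
  -- key counting bound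
  have key : ∑ k : Fin n → F,
      (univ.filter fun p : (Fin n → F) × (Fin n → F) =>
        (fun x i => f x i + k i * x i) p.1 = (fun x i => f x i + k i * x i) p.2).card
      ≤ (q * (q + (q - 1))) ^ n := by
    have swap : ∑ k : Fin n → F,
        (univ.filter fun p : (Fin n → F) × (Fin n → F) =>
          (fun x i => f x i + k i * x i) p.1 = (fun x i => f x i + k i * x i) p.2).card
        = ∑ p : (Fin n → F) × (Fin n → F),
            (univ.filter fun k : Fin n → F =>
              ∀ i, f p.1 i + k i * p.1 i = f p.2 i + k i * p.2 i).card := by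
      simp_rw [Finset.card_filter, funext_iff]
      rw [Finset.sum_comm]
    rw [swap]
    have hp : ∀ p : (Fin n → F) × (Fin n → F),
        (univ.filter fun k : Fin n → F =>
          ∀ i, f p.1 i + k i * p.1 i = f p.2 i + k i * p.2 i).card
        ≤ ∏ i, (if p.1 i = p.2 i then q else 1) := by
      intro p
      have hset : (univ.filter fun k : Fin n → F =>
            ∀ i, f p.1 i + k i * p.1 i = f p.2 i + k i * p.2 i)
          = Fintype.piFinset (fun i => univ.filter fun c =>
              f p.1 i + c * p.1 i = f p.2 i + c * p.2 i) := by
        ext k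
        simp [Fintype.mem_piFinset]
      rw [hset, Fintype.card_piFinset]
      refine Finset.prod_le_prod' fun i _ => ?_
      by_cases h : p.1 i = p.2 i
      · rw [if_pos h]
        calc (univ.filter fun c : F =>
              f p.1 i + c * p.1 i = f p.2 i + c * p.2 i).card
            ≤ (univ : Finset F).card := Finset.card_filter_le _ _
          _ = q := by rw [Finset.card_univ, hq]
      · rw [if_neg h]
        refine Finset.card_le_one.mpr fun a ha b hb => ?_
        simp only [mem_filter, mem_univ, true_and] at ha hb
        have hd : p.1 i - p.2 i ≠ 0 := sub_ne_zero.mpr h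
        have : a * (p.1 i - p.2 i) = b * (p.1 i - p.2 i) := by
          linear_combination ha - hb
        exact mul_right_cancel₀ hd this
    calc ∑ p : (Fin n → F) × (Fin n → F),
          (univ.filter fun k : Fin n → F =>
            ∀ i, f p.1 i + k i * p.1 i = f p.2 i + k i * p.2 i).card
        ≤ ∑ p : (Fin n → F) × (Fin n → F), ∏ i, (if p.1 i = p.2 i then q else 1) :=
          Finset.sum_le_sum fun p _ => hp p
      _ = ∑ x : Fin n → F, ∑ y : Fin n → F, ∏ i, (if x i = y i then q else 1) := by
          rw [← Finset.univ_product_univ, Finset.sum_product]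
      _ = ∑ x : Fin n → F, ∏ i : Fin n, ∑ b : F, (if x i = b then q else 1) := by
          refine Finset.sum_congr rfl fun x _ => ?_
          rw [Finset.prod_univ_sum]
          simp [Fintype.piFinset_univ]
      _ = ∑ x : Fin n → F, ∏ _i : Fin n, (q + (q - 1)) :=
          Finset.sum_congr rfl fun x _ => Finset.prod_congr rfl fun i _ =>
            sum_ite_row q hq0 hq (x i)
      _ = (q * (q + (q - 1))) ^ n := by
          simp [Finset.prod_const, Finset.sum_const, Finset.card_univ, hQ, mul_pow]
  -- real-valued bound on the sum of collision probabilities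
  have hqR : (0 : ℝ) < (q : ℝ) := by exact_mod_cast hq0
  have hsum : ∑ k : Fin n → F, collProb (fun x i => f x i + k i * x i)
      ≤ (2 - 1 / (q : ℝ)) ^ n := by
    have e1 : ∀ k : Fin n → F, collProb (fun x i => f x i + k i * x i)
        = ((univ.filter fun p : (Fin n → F) × (Fin n → F) =>
            (fun x i => f x i + k i * x i) p.1 = (fun x i => f x i + k i * x i) p.2).card : ℝ)
          / ((q : ℝ) ^ n) ^ 2 := by
      intro k
      rw [collProb_eq, hQ]
      push_cast
      ring_nf
    simp_rw [e1]
    rw [← Finset.sum_div]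
    rw [div_le_iff₀ (by positivity)]
    have hcast : (∑ k : Fin n → F,
        ((univ.filter fun p : (Fin n → F) × (Fin n → F) =>
            (fun x i => f x i + k i * x i) p.1 = (fun x i => f x i + k i * x i) p.2).card : ℝ))
        ≤ ((q * (q + (q - 1))) ^ n : ℕ) := by exact_mod_cast key
    refine hcast.trans ?_
    have hbase : (((q * (q + (q - 1))) ^ n : ℕ) : ℝ)
        = ((q : ℝ) * (2 * q - 1)) ^ n := by
      have : ((q - 1 : ℕ) : ℝ) = (q : ℝ) - 1 := by
        have := Nat.cast_sub hq0 (R := ℝ)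
        simpa using this
      push_cast [this]
      ring
    rw [hbase]
    have : (2 - 1 / (q : ℝ)) ^ n * ((q : ℝ) ^ n) ^ 2
        = ((2 - 1 / (q : ℝ)) * (q : ℝ) ^ 2) ^ n := by
      rw [mul_pow, ← pow_mul, mul_comm n 2, pow_mul]
    rw [this]
    have hb2 : (q : ℝ) * (2 * (q : ℝ) - 1) = (2 - 1 / (q : ℝ)) * (q : ℝ) ^ 2 := by
      field_simp
    rw [hb2]
  have hcoef : (0 : ℝ) ≤ 1 / (q : ℝ) ^ n := by positivity
  exact mul_le_mul_of_nonneg_left hsum hcoef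
end

section
/- Let q be a prime power, n ≥ 1, and f : F_q^n → F_q^n such that for each i, the i-th component f_i(x) depends only on x_i. For k ∈ F_q^n define g_k(x) := f(x) + (k_1 x_1, ..., k_n x_n). If A is uniform on F_q^n, then the average over k ∈ F_q^n of CP(g_k(A)) equals exactly (1/q^n)·(2 - 1/q)^n. -/
open Finset

/-- Collision probability as a normalized count of collision pairs. -/
lemma collProb_eq_pairs {α β : Type*} [Fintype α] [Fintype β] [DecidableEq β] (g : α → β) :
    collProb g = (∑ x : α, ∑ x' : α, if g x = g x' then (1:ℝ) else 0) /
      (Fintype.card α : ℝ) ^ 2 := by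
  unfold collProb mass
  have key : ∀ y, ((Finset.univ.filter (fun x => g x = y)).card : ℝ)
      = ∑ x : α, if g x = y then (1:ℝ) else 0 := by
    intro y; rw [Finset.sum_boole]
  have main : ∑ y, (∑ x : α, if g x = y then (1:ℝ) else 0) ^ 2
      = ∑ x : α, ∑ x' : α, if g x = g x' then (1:ℝ) else 0 := by
    have step1 : ∀ y : β, (∑ x : α, if g x = y then (1:ℝ) else 0) ^ 2
        = ∑ x : α, ∑ x' : α,
            (if g x = y then (1:ℝ) else 0) * (if g x' = y then (1:ℝ) else 0) := by
      intro y; rw [sq, Finset.sum_mul_sum]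
    rw [Finset.sum_congr rfl fun y _ => step1 y]
    rw [Finset.sum_comm]
    refine Finset.sum_congr rfl fun x _ => ?_
    rw [Finset.sum_comm]
    refine Finset.sum_congr rfl fun x' _ => ?_
    simp [ite_and, eq_comm]
  simp only [key, div_pow, ← Finset.sum_div, main]

/-- Per-coordinate collision count: `q * (2q - 1)`. -/
lemma coord_count (F : Type*) [Field F] [Fintype F] [DecidableEq F] (h : F → F) :
    (∑ k : F, ∑ a : F, ∑ b : F,
        if h a + k * a = h b + k * b then (1:ℝ) else 0)
      = (Fintype.card F : ℝ) * (2 * (Fintype.card F : ℝ) - 1) := by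
  rw [Finset.sum_comm]
  have inner : ∀ a : F, (∑ k : F, ∑ b : F, if h a + k * a = h b + k * b then (1:ℝ) else 0)
      = ∑ b : F, ∑ k : F, if h a + k * a = h b + k * b then (1:ℝ) else 0 :=
    fun a => Finset.sum_comm
  simp only [inner]
  have hkb : ∀ a b : F, (∑ k : F, if h a + k * a = h b + k * b then (1:ℝ) else 0)
      = if a = b then (Fintype.card F : ℝ) else 1 := by
    intro a b
    by_cases hab : a = b
    · subst hab; simp [Finset.card_univ]
    · have hne : a - b ≠ 0 := sub_ne_zero.mpr hab
      have : ∀ k : F, (h a + k * a = h b + k * b) ↔ (k = (h b - h a) / (a - b)) := by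
        intro k
        rw [eq_div_iff hne]
        constructor <;> intro H <;> linear_combination H
      simp only [this, hab, if_false]
      simp
  simp only [hkb]
  have : ∀ a : F, (∑ b : F, if a = b then (Fintype.card F : ℝ) else 1)
      = 2 * (Fintype.card F : ℝ) - 1 := by
    intro a
    have : ∀ b : F, (if a = b then (Fintype.card F : ℝ) else 1)
        = 1 + (if a = b then (Fintype.card F : ℝ) - 1 else 0) := by
      intro b; split <;> ring
    simp only [this, Finset.sum_add_distrib, Finset.sum_const, Finset.sum_ite_eq,
      Finset.mem_univ, if_true, Finset.card_univ, nsmul_eq_mul, mul_one]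
    ring
  simp only [this, Finset.sum_const, Finset.card_univ, nsmul_eq_mul]

/-- Factorization of the triple sum over functions into a product of coordinate sums. -/
lemma triple_factor (n : ℕ) (F : Type*) [Fintype F] [DecidableEq F]
    (φ : Fin n → F → F → F → ℝ) :
    (∑ k : Fin n → F, ∑ x : Fin n → F, ∑ x' : Fin n → F, ∏ i, φ i (k i) (x i) (x' i))
      = ∏ i, ∑ k : F, ∑ a : F, ∑ b : F, φ i k a b := by
  calc (∑ k : Fin n → F, ∑ x : Fin n → F, ∑ x' : Fin n → F, ∏ i, φ i (k i) (x i) (x' i))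
      = ∑ k : Fin n → F, ∑ x : Fin n → F, ∏ i, ∑ b : F, φ i (k i) (x i) b := by
        refine Finset.sum_congr rfl fun k _ => Finset.sum_congr rfl fun x _ => ?_
        exact (Fintype.prod_sum (f := fun i b => φ i (k i) (x i) b)).symm
    _ = ∑ k : Fin n → F, ∏ i, ∑ a : F, ∑ b : F, φ i (k i) a b := by
        refine Finset.sum_congr rfl fun k _ => ?_
        exact (Fintype.prod_sum (f := fun i a => ∑ b : F, φ i (k i) a b)).symm
    _ = ∏ i, ∑ k : F, ∑ a : F, ∑ b : F, φ i k a b :=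
        (Fintype.prod_sum (f := fun i k => ∑ a : F, ∑ b : F, φ i k a b)).symm

theorem stmt1 (q n : ℕ) (hn : 1 ≤ n) (F : Type*) [Field F] [Fintype F] [DecidableEq F]
    (hq : Fintype.card F = q) (f : (Fin n → F) → (Fin n → F))
    (h : Fin n → F → F) (hf : ∀ x i, f x i = h i (x i)) :
    (1 / (q : ℝ) ^ n) *
        ∑ k : Fin n → F, collProb (fun x i => f x i + k i * x i) =
      (1 / (q : ℝ) ^ n) * (2 - 1 / (q : ℝ)) ^ n := by
  have hqpos : 0 < q := hq ▸ Fintype.card_pos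
  have hq0 : (q : ℝ) ≠ 0 := Nat.cast_ne_zero.mpr hqpos.ne'
  have hcard : (Fintype.card (Fin n → F) : ℝ) = (q : ℝ) ^ n := by
    rw [Fintype.card_fun, hq, Fintype.card_fin]; push_cast; ring
  have step1 : ∀ k : Fin n → F,
      collProb (fun x i => f x i + k i * x i)
        = (∑ x : Fin n → F, ∑ x' : Fin n → F,
            ∏ i, if h i (x i) + k i * x i = h i (x' i) + k i * x' i then (1:ℝ) else 0)
            / ((q : ℝ) ^ n) ^ 2 := by
    intro k
    rw [collProb_eq_pairs, hcard]
    congr 1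
    refine Finset.sum_congr rfl fun x _ => Finset.sum_congr rfl fun x' _ => ?_
    rw [Finset.prod_boole]
    congr 1
    simp only [funext_iff, hf, Finset.mem_univ, forall_const, eq_iff_iff]
  have main : (∑ k : Fin n → F, collProb (fun x i => f x i + k i * x i))
      = (2 - 1 / (q : ℝ)) ^ n := by
    simp only [step1, ← Finset.sum_div]
    rw [triple_factor n F
      (fun i k a b => if h i a + k * a = h i b + k * b then (1:ℝ) else 0)]
    have : ∀ i : Fin n, (∑ k : F, ∑ a : F, ∑ b : F,
        if h i a + k * a = h i b + k * b then (1:ℝ) else 0)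
        = (q : ℝ) * (2 * (q : ℝ) - 1) := by
      intro i
      rw [coord_count F (h i), hq]
    rw [Finset.prod_congr rfl fun i _ => this i, Finset.prod_const, Finset.card_univ,
      Fintype.card_fin]
    rw [div_eq_iff (by positivity)]
    have hpow : ((q:ℝ) ^ n) ^ 2 = ((q:ℝ) ^ 2) ^ n := by ring
    rw [hpow, ← mul_pow]
    congr 1
    field_simp
  rw [main]
end

section
/- Let q be a prime power, n ≥ 1, and f : F_q^n → F_q^n an arbitrary function. For k ∈ F_q^n define g_k(x) := f(x) + (k_1 x_1, ..., k_n x_n). If A is uniform on F_q^n, then the average over k of the Shannon entropy H(g_k(A)) is at least log_2(q^n) - n·log_2(2 - 1/q). -/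
open Finset

section Aux

lemma jensen_key {ι : Type*} [Fintype ι] (P : ι → ℝ) (N B : ℝ)
    (hP : ∀ i, 0 ≤ P i) (hN : 0 < N) (hsum : ∑ i, P i = N)
    (hB : ∑ i, P i ^ 2 ≤ N * B) :
    (1 / N) * ∑ i, P i * Real.logb 2 (P i) ≤ Real.logb 2 B := by
  classical
  set t : Finset ι := univ.filter (fun i => 0 < P i) with ht
  have hzero : ∀ i ∈ (univ : Finset ι), i ∉ t → P i = 0 := by
    intro i _ hit
    simp only [ht, mem_filter, mem_univ, true_and, not_lt] at hit
    exact le_antisymm hit (hP i)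
  have hsumt' : ∑ i ∈ t, P i = ∑ i, P i :=
    Finset.sum_subset (Finset.filter_subset _ _) (fun i hi hit => hzero i hi hit)
  have hsq : ∑ i ∈ t, P i ^ 2 = ∑ i, P i ^ 2 :=
    Finset.sum_subset (Finset.filter_subset _ _)
      (fun i hi hit => by rw [hzero i hi hit]; ring)
  have htne : ∃ i ∈ t, 0 < P i := by
    by_contra h
    push_neg at h
    have : ∑ i ∈ t, P i = 0 := Finset.sum_eq_zero (fun i hi => le_antisymm (h i hi) (hP i))
    rw [hsumt', hsum] at this; exact hN.ne' this
  obtain ⟨i0, hi0t, hi0⟩ := htne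
  have hsqpos : 0 < ∑ i, P i ^ 2 := by
    rw [← hsq]
    apply Finset.sum_pos' (fun i _ => sq_nonneg _) ⟨i0, hi0t, by positivity⟩
  have hw : ∀ i ∈ t, 0 ≤ P i / N := fun i _ => div_nonneg (hP i) hN.le
  have hw1 : ∑ i ∈ t, P i / N = 1 := by
    rw [← Finset.sum_div, hsumt', hsum, div_self hN.ne']
  have hmem : ∀ i ∈ t, P i ∈ Set.Ioi (0:ℝ) := by
    intro i hi; simp only [ht, mem_filter] at hi; exact hi.2
  have hjen := (strictConcaveOn_log_Ioi.concaveOn).le_map_sum hw hw1 hmem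
  simp only [smul_eq_mul] at hjen
  have heq1 : ∑ i ∈ t, P i / N * P i = (∑ i, P i ^ 2) / N := by
    rw [← hsq, Finset.sum_div]
    exact Finset.sum_congr rfl (fun i _ => by ring)
  rw [heq1] at hjen
  have hBpos : 0 < B := by
    have h0 : 0 < N * B := lt_of_lt_of_le hsqpos hB
    nlinarith
  have hlog : Real.log ((∑ i, P i ^ 2) / N) ≤ Real.log B :=
    Real.log_le_log (by positivity) (by rw [div_le_iff₀ hN, mul_comm]; exact hB)
  have hchain : ∑ i ∈ t, P i / N * Real.log (P i) ≤ Real.log B := hjen.trans hlog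
  have hlog2 : (0:ℝ) < Real.log 2 := Real.log_pos one_lt_two
  have hfin : ∑ i ∈ t, P i * Real.logb 2 (P i) = ∑ i, P i * Real.logb 2 (P i) :=
    Finset.sum_subset (Finset.filter_subset _ _)
      (fun i hi hit => by rw [hzero i hi hit]; simp)
  rw [← hfin]
  have heq2 : (1 / N) * ∑ i ∈ t, P i * Real.logb 2 (P i)
      = (∑ i ∈ t, P i / N * Real.log (P i)) / Real.log 2 := by
    rw [Finset.sum_div, Finset.mul_sum]
    refine Finset.sum_congr rfl fun i _ => ?_
    rw [Real.logb]
    ring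
  rw [heq2, Real.logb]
  gcongr

lemma sum_mass {α β : Type*} [Fintype α] [Nonempty α] [Fintype β] [DecidableEq β]
    (g : α → β) : ∑ y, mass g y = 1 := by
  unfold mass
  rw [← Finset.sum_div, ← Nat.cast_sum]
  rw [← Finset.card_eq_sum_card_fiberwise (fun x _ => Finset.mem_univ (g x))]
  rw [Finset.card_univ, div_self]
  exact Nat.cast_ne_zero.mpr Fintype.card_ne_zero

lemma sum_sq_mass {α β : Type*} [Fintype α] [Fintype β] [DecidableEq α] [DecidableEq β]
    (g : α → β) : ∑ y, (mass g y) ^ 2 =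
      (∑ x : α, ∑ x' : α, if g x = g x' then (1:ℝ) else 0) / (Fintype.card α : ℝ)^2 := by
  unfold mass
  have h1 : ∀ y : β, ((Finset.univ.filter (fun x => g x = y)).card : ℝ)
      = ∑ x : α, if g x = y then (1:ℝ) else 0 := by
    intro y
    rw [Finset.card_filter]
    push_cast
    rfl
  have h2 : ∑ y : β, (∑ x : α, if g x = y then (1:ℝ) else 0)^2
      = ∑ x : α, ∑ x' : α, if g x = g x' then (1:ℝ) else 0 := by
    simp only [sq, Finset.sum_mul_sum]
    rw [Finset.sum_comm]
    refine Finset.sum_congr rfl fun x _ => ?_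
    rw [Finset.sum_comm]
    refine Finset.sum_congr rfl fun x' _ => ?_
    simp only [ite_mul, one_mul, zero_mul]
    rw [Finset.sum_ite_eq Finset.univ (g x) (fun y => if g x' = y then (1:ℝ) else 0)]
    simp [eq_comm]
  rw [← h2]
  rw [Finset.sum_div]
  refine Finset.sum_congr rfl fun y _ => ?_
  rw [h1, div_pow]

lemma count_bound (q n : ℕ) (F : Type*) [Field F] [Fintype F] [DecidableEq F]
    (hq : Fintype.card F = q) (f : (Fin n → F) → (Fin n → F)) :
    ∑ k : Fin n → F, ∑ x : Fin n → F, ∑ x' : Fin n → F,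
      (if (fun i => f x i + k i * x i) = (fun i => f x' i + k i * x' i) then (1:ℝ) else 0)
      ≤ (q:ℝ)^n * (2*q-1)^n := by
  classical
  rw [Finset.sum_comm]
  have hstep : ∀ x : Fin n → F, ∑ k : Fin n → F, ∑ x' : Fin n → F,
      (if (fun i => f x i + k i * x i) = (fun i => f x' i + k i * x' i) then (1:ℝ) else 0)
      = ∑ x' : Fin n → F, ∑ k : Fin n → F,
      (if (fun i => f x i + k i * x i) = (fun i => f x' i + k i * x' i) then (1:ℝ) else 0) :=
    fun x => Finset.sum_comm
  calc ∑ x : Fin n → F, ∑ k : Fin n → F, ∑ x' : Fin n → F,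
      (if (fun i => f x i + k i * x i) = (fun i => f x' i + k i * x' i) then (1:ℝ) else 0)
      = ∑ x : Fin n → F, ∑ x' : Fin n → F, ∑ k : Fin n → F,
      (if (fun i => f x i + k i * x i) = (fun i => f x' i + k i * x' i) then (1:ℝ) else 0) :=
        Finset.sum_congr rfl fun x _ => hstep x
    _ ≤ ∑ x : Fin n → F, ∑ x' : Fin n → F, ∏ i : Fin n,
          (if x i = x' i then (q:ℝ) else 1) := by
        refine Finset.sum_le_sum fun x _ => Finset.sum_le_sum fun x' _ => ?_
        have hiff : ∀ k : Fin n → F,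
            ((fun i => f x i + k i * x i) = (fun i => f x' i + k i * x' i))
            ↔ ∀ i, k i * (x i - x' i) = f x' i - f x i := by
          intro k
          rw [funext_iff]
          constructor
          · intro h i; linear_combination h i
          · intro h i; linear_combination h i
        have hrw : ∑ k : Fin n → F,
            (if (fun i => f x i + k i * x i) = (fun i => f x' i + k i * x' i) then (1:ℝ) else 0)
            = ∑ k : Fin n → F, ∏ i : Fin n,
              (if k i * (x i - x' i) = f x' i - f x i then (1:ℝ) else 0) := by
          refine Finset.sum_congr rfl fun k _ => ?_
          by_cases h : ∀ i, k i * (x i - x' i) = f x' i - f x i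
          · rw [if_pos ((hiff k).mpr h),
              Finset.prod_congr rfl (fun i _ => if_pos (h i)), Finset.prod_const_one]
          · rw [if_neg (fun hc => h ((hiff k).mp hc))]
            push_neg at h
            obtain ⟨i, hi⟩ := h
            exact (Finset.prod_eq_zero (Finset.mem_univ i)
              (show (if k i * (x i - x' i) = f x' i - f x i then (1:ℝ) else 0) = 0 from
                if_neg hi)).symm
        rw [hrw]
        have hswap : ∑ k : Fin n → F, ∏ i : Fin n,
            (if k i * (x i - x' i) = f x' i - f x i then (1:ℝ) else 0)
            = ∏ i : Fin n, ∑ t : F, (if t * (x i - x' i) = f x' i - f x i then (1:ℝ) else 0) :=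
          (Fintype.prod_sum (fun i t => if t * (x i - x' i) = f x' i - f x i then (1:ℝ) else 0)).symm
        rw [hswap]
        refine Finset.prod_le_prod (fun i _ => Finset.sum_nonneg fun t _ => by positivity)
          (fun i _ => ?_)
        by_cases hxx : x i = x' i
        · rw [if_pos hxx]
          calc ∑ t : F, (if t * (x i - x' i) = f x' i - f x i then (1:ℝ) else 0)
              ≤ ∑ _t : F, (1:ℝ) := Finset.sum_le_sum fun t _ => by split <;> norm_num
            _ = q := by simp [hq]
        · rw [if_neg hxx]
          have hd : x i - x' i ≠ 0 := sub_ne_zero.mpr hxx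
          have heq : ∀ t : F, (t * (x i - x' i) = f x' i - f x i)
              ↔ t = (f x' i - f x i) / (x i - x' i) := by
            intro t; rw [eq_div_iff hd]
          simp only [heq]
          rw [Finset.sum_ite_eq' Finset.univ]
          simp
    _ ≤ (q:ℝ)^n * (2*q-1)^n := by
        have hinner : ∀ x : Fin n → F, ∑ x' : Fin n → F, ∏ i : Fin n,
            (if x i = x' i then (q:ℝ) else 1) = ((2*(q:ℝ)-1))^n := by
          intro x
          have hswap : ∑ x' : Fin n → F, ∏ i : Fin n, (if x i = x' i then (q:ℝ) else 1)
              = ∏ i : Fin n, ∑ b : F, (if x i = b then (q:ℝ) else 1) :=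
            (Fintype.prod_sum (fun i b => if x i = b then (q:ℝ) else 1)).symm
          rw [hswap]
          have hcol : ∀ i : Fin n, ∑ b : F, (if x i = b then (q:ℝ) else 1) = 2*(q:ℝ)-1 := by
            intro i
            have : ∀ b : F, (if x i = b then (q:ℝ) else 1)
                = (if x i = b then (q:ℝ)-1 else 0) + 1 := by
              intro b; split <;> ring
            simp only [this]
            rw [Finset.sum_add_distrib, Finset.sum_ite_eq Finset.univ]
            simp [hq]
            ring
          rw [Finset.prod_congr rfl (fun i _ => hcol i), Finset.prod_const, Finset.card_univ,
            Fintype.card_fin]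
        rw [Finset.sum_congr rfl (fun x _ => hinner x), Finset.sum_const, Finset.card_univ]
        have : Fintype.card (Fin n → F) = q ^ n := by simp [hq]
        rw [this]
        rw [nsmul_eq_mul]
        push_cast
        exact le_of_eq (by ring)

end Aux

theorem stmt3 (q n : ℕ) (hn : 1 ≤ n) (F : Type*) [Field F] [Fintype F] [DecidableEq F]
    (hq : Fintype.card F = q) (f : (Fin n → F) → (Fin n → F)) :
    Real.logb 2 ((q : ℝ) ^ n) - n * Real.logb 2 (2 - 1 / (q : ℝ)) ≤
      (1 / (q : ℝ) ^ n) *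
        ∑ k : Fin n → F, shannon (fun x i => f x i + k i * x i) := by
  classical
  have hq2 : 2 ≤ q := by
    have := Fintype.one_lt_card (α := F)
    omega
  have hq2r : (2:ℝ) ≤ (q:ℝ) := by exact_mod_cast hq2
  have hq0 : (0:ℝ) < q := by linarith
  set N : ℝ := (q:ℝ)^n with hNdef
  have hN : 0 < N := by positivity
  have hcard : (Fintype.card (Fin n → F) : ℝ) = N := by
    simp [hq, hNdef]
  have ha : (0:ℝ) < 2 - 1/(q:ℝ) := by
    have h1 : 1/(q:ℝ) ≤ 1 := by
      rw [div_le_one hq0]; linarith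
    linarith
  set B : ℝ := (2 - 1/(q:ℝ))^n / N with hBdef
  set P : ((Fin n → F) × (Fin n → F)) → ℝ :=
    fun p => mass (fun x i => f x i + p.1 i * x i) p.2 with hPdef
  have hPnn : ∀ p, 0 ≤ P p := by
    intro p
    simp only [hPdef, mass]
    positivity
  have hsum : ∑ p, P p = N := by
    rw [Fintype.sum_prod_type]
    rw [Finset.sum_congr rfl (fun k _ => sum_mass (fun x i => f x i + k i * x i))]
    rw [Finset.sum_const, Finset.card_univ, nsmul_eq_mul, mul_one, hNdef]
    simp [hq]
  have hsqle : ∑ p, P p ^ 2 ≤ N * B := by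
    rw [Fintype.sum_prod_type]
    have h1 : ∀ k : Fin n → F, ∑ y, (mass (fun x i => f x i + k i * x i) y) ^ 2
        = (∑ x : Fin n → F, ∑ x' : Fin n → F,
            if (fun i => f x i + k i * x i) = (fun i => f x' i + k i * x' i) then (1:ℝ) else 0)
          / N ^ 2 := by
      intro k
      rw [sum_sq_mass (fun x i => f x i + k i * x i), hcard]
    rw [Finset.sum_congr rfl (fun k _ => h1 k), ← Finset.sum_div]
    have h2 := count_bound q n F hq f
    have h3 : (q:ℝ)^n * (2*q-1)^n / N^2 = N * B := by
      have hne : (q:ℝ) ≠ 0 := hq0.ne'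
      have ha' : (2 - 1/(q:ℝ)) = (2*(q:ℝ)-1)/(q:ℝ) := by field_simp
      have hNB : N * B = (2 - 1/(q:ℝ))^n := by
        rw [hBdef]; field_simp
      rw [hNB, ha', div_pow, hNdef]
      rw [div_eq_div_iff (by positivity) (by positivity)]
      ring
    rw [← h3]
    gcongr
  have hjen := jensen_key P N B hPnn hN hsum hsqle
  have hR : (1 / (q:ℝ)^n) * ∑ k : Fin n → F, shannon (fun x i => f x i + k i * x i)
      = -((1 / N) * ∑ p, P p * Real.logb 2 (P p)) := by
    have hS : ∑ k : Fin n → F, shannon (fun x i => f x i + k i * x i)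
        = -∑ p : (Fin n → F) × (Fin n → F), P p * Real.logb 2 (P p) := by
      rw [Fintype.sum_prod_type]
      simp only [shannon, hPdef]
      rw [← Finset.sum_neg_distrib]
    rw [hS, ← hNdef]
    ring
  rw [hR]
  have hgoal : Real.logb 2 ((q:ℝ)^n) - n * Real.logb 2 (2 - 1/(q:ℝ)) = -Real.logb 2 B := by
    rw [hBdef, Real.logb_div (by positivity) hN.ne', hNdef]
    simp only [Real.logb_pow]
    ring
  rw [hgoal]
  linarith
end

section
/- Let q be a prime power, n ≥ 1, f : F_q^n → F_q^n arbitrary, and fix a, a' ∈ F_q^n with Hamming distance d ≥ 1. Let K be uniform on F_q^n. Then the probability over K that f(a) + K⊙a = f(a') + K⊙a' is at most q^{-d}, where K⊙a := (K_1 a_1, ..., K_n a_n). -/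
theorem stmt6 (q n d : ℕ) (hn : 1 ≤ n) (hd : 1 ≤ d)
    (F : Type*) [Field F] [Fintype F] [DecidableEq F]
    (hq : Fintype.card F = q) (f : (Fin n → F) → (Fin n → F))
    (a a' : Fin n → F) (hdist : hammingDist a a' = d) :
    ((Finset.univ.filter
        (fun k : Fin n → F =>
          (fun i => f a i + k i * a i) = (fun i => f a' i + k i * a' i))).card : ℝ) /
        (q : ℝ) ^ n ≤ 1 / (q : ℝ) ^ d := by
  classical
  subst hq
  subst hdist
  set q := Fintype.card F with hqdef
  have hq1 : 1 ≤ q := Fintype.card_pos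
  set S : Finset (Fin n) := Finset.univ.filter (fun i => a i ≠ a' i) with hS
  have hSd : S.card = hammingDist a a' := rfl
  set c : Fin n → F := fun i => (f a' i - f a i) / (a i - a' i) with hc
  have key : (Finset.univ.filter
        (fun k : Fin n → F =>
          (fun i => f a i + k i * a i) = (fun i => f a' i + k i * a' i))) ⊆
      Finset.univ.filter (fun k : Fin n → F => ∀ i ∈ S, k i = c i) := by
    intro k hk
    simp only [Finset.mem_filter, Finset.mem_univ, true_and] at hk ⊢
    intro i hi
    have hia : a i ≠ a' i := by simpa [hS] using hi
    have hne : a i - a' i ≠ 0 := sub_ne_zero.mpr hia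
    have h := congrFun hk i
    rw [hc, eq_div_iff hne]
    linear_combination h
  -- count the superset
  have e : {k : Fin n → F // ∀ i ∈ S, k i = c i} ≃ ({i : Fin n // i ∉ S} → F) :=
    { toFun := fun k j => k.1 j.1
      invFun := fun g => ⟨fun i => if h : i ∈ S then c i else g ⟨i, h⟩,
        fun i hi => by simp [hi]⟩
      left_inv := fun k => by
        ext i
        by_cases h : i ∈ S
        · simp [h, k.2 i h]
        · simp [h]
      right_inv := fun g => by ext j; simp [j.2] }
  have hcardsub : Fintype.card {k : Fin n → F // ∀ i ∈ S, k i = c i}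
      = q ^ (n - S.card) := by
    rw [Fintype.card_congr e, Fintype.card_fun]
    congr 1
    rw [Fintype.card_subtype]
    have : (Finset.univ.filter (fun i : Fin n => i ∉ S)) = Sᶜ := by
      ext i; simp
    rw [this, Finset.card_compl, Fintype.card_fin]
  have hTcard : (Finset.univ.filter (fun k : Fin n → F => ∀ i ∈ S, k i = c i)).card
      = q ^ (n - S.card) := by
    rw [← hcardsub, Fintype.card_subtype]
  have hdn : S.card ≤ n := by
    calc S.card ≤ (Finset.univ : Finset (Fin n)).card := Finset.card_le_card (Finset.filter_subset _ _)
    _ = n := by simp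
  have hN : ((Finset.univ.filter
        (fun k : Fin n → F =>
          (fun i => f a i + k i * a i) = (fun i => f a' i + k i * a' i))).card : ℝ)
      ≤ (q : ℝ) ^ (n - S.card) := by
    have := Finset.card_le_card key
    rw [hTcard] at this
    exact_mod_cast this
  have hqR : (0 : ℝ) < (q : ℝ) := by exact_mod_cast hq1
  rw [div_le_div_iff₀ (by positivity) (by positivity)]
  calc ((Finset.univ.filter
        (fun k : Fin n → F =>
          (fun i => f a i + k i * a i) = (fun i => f a' i + k i * a' i))).card : ℝ)
        * (q : ℝ) ^ S.card
      ≤ (q : ℝ) ^ (n - S.card) * (q : ℝ) ^ S.card := by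
        apply mul_le_mul_of_nonneg_right hN (by positivity)
    _ = (q : ℝ) ^ n := by
        rw [← pow_add, Nat.sub_add_cancel hdn]
    _ = 1 * (q : ℝ) ^ n := by ring
end

section
/- Let q be a prime power, A uniform on F_q, and g_k(x) := x^2 + kx. Then (1/q) Σ_{k ∈ F_q} H(g_k(A)) = log_2(q) - (1 - 1/q). -/
open Finset

-- general lemma: shannon g = -(1/q) ∑_x logb 2 (mass g (g x))
lemma shannon_eq_sum_src {α β : Type*} [Fintype α] [Fintype β] [DecidableEq β]
    (g : α → β) :
    shannon g = -(1/(Fintype.card α : ℝ)) * ∑ x, Real.logb 2 (mass g (g x)) := by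
  have h : ∑ y, mass g y * Real.logb 2 (mass g y)
      = (1/(Fintype.card α : ℝ)) * ∑ x, Real.logb 2 (mass g (g x)) := by
    rw [← Finset.sum_fiberwise' univ g (fun y => Real.logb 2 (mass g y)), Finset.mul_sum]
    refine Finset.sum_congr rfl fun y _ => ?_
    rw [Finset.sum_const, nsmul_eq_mul]
    unfold mass
    ring
  unfold shannon
  rw [h]
  ring

lemma fiber_filter {F : Type*} [Field F] [Fintype F] [DecidableEq F] (k x : F) :
    (univ.filter (fun x' : F => x'^2 + k*x' = x^2 + k*x)) = {x, -x - k} := by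
  ext x'
  simp only [mem_filter, mem_univ, true_and, mem_insert, mem_singleton]
  constructor
  · intro h
    have h2 : (x' - x) * (x' + x + k) = 0 := by linear_combination h
    rcases mul_eq_zero.1 h2 with h3 | h3
    · left; exact sub_eq_zero.1 h3
    · right; linear_combination h3
  · rintro (rfl | rfl) <;> ring

lemma shannon_g {F : Type*} [Field F] [Fintype F] [DecidableEq F] (k : F) :
    shannon (fun x : F => x ^ 2 + k * x)
      = Real.logb 2 (Fintype.card F)
        - (1/(Fintype.card F : ℝ)) * ∑ x : F, (if x = -x - k then (0:ℝ) else 1) := by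
  have hq0 : (0:ℝ) < Fintype.card F := by
    exact_mod_cast Fintype.card_pos
  rw [shannon_eq_sum_src]
  have hmass : ∀ x : F, mass (fun x : F => x ^ 2 + k * x) (x ^ 2 + k * x)
      = (if x = -x - k then (1:ℝ) else 2) / (Fintype.card F : ℝ) := by
    intro x
    unfold mass
    rw [show (univ.filter (fun x' : F => x' ^ 2 + k * x' = x ^ 2 + k * x)) = {x, -x - k}
        from fiber_filter k x]
    by_cases h : x = -x - k
    · rw [if_pos h, ← h]
      simp
    · rw [if_neg h, Finset.card_insert_of_notMem (by simpa using h), Finset.card_singleton]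
      norm_num
  have hlog : ∀ x : F, Real.logb 2 (mass (fun x : F => x ^ 2 + k * x) (x ^ 2 + k * x))
      = (if x = -x - k then (0:ℝ) else 1) - Real.logb 2 (Fintype.card F) := by
    intro x
    rw [hmass x, Real.logb_div (by split <;> norm_num) (ne_of_gt hq0)]
    congr 1
    split
    · exact Real.logb_one
    · exact Real.logb_self_eq_one (by norm_num)
  calc -(1/(Fintype.card F : ℝ)) * ∑ x : F, Real.logb 2
          (mass (fun x : F => x ^ 2 + k * x) ((fun x : F => x ^ 2 + k * x) x))
      = -(1/(Fintype.card F : ℝ)) * ∑ x : F,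
          ((if x = -x - k then (0:ℝ) else 1) - Real.logb 2 (Fintype.card F)) := by
        congr 1
        exact Finset.sum_congr rfl fun x _ => hlog x
    _ = _ := by
        rw [Finset.sum_sub_distrib, Finset.sum_const, Finset.card_univ, nsmul_eq_mul]
        field_simp
        ring

theorem stmt15 (q : ℕ) (F : Type*) [Field F] [Fintype F] [DecidableEq F]
    (hq : Fintype.card F = q) :
    (1 / (q : ℝ)) * ∑ k : F, shannon (fun x : F => x ^ 2 + k * x) =
      Real.logb 2 (q : ℝ) - (1 - 1 / (q : ℝ)) := by
  subst hq
  have hq0 : (0:ℝ) < (Fintype.card F : ℝ) := by exact_mod_cast Fintype.card_pos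
  have inner : ∀ x : F, ∑ k : F, (if x = -x - k then (0:ℝ) else 1)
      = (Fintype.card F : ℝ) - 1 := by
    intro x
    have h1 : ∀ k : F, (if x = -x - k then (0:ℝ) else 1)
        = 1 - (if k = -x - x then (1:ℝ) else 0) := by
      intro k
      have hiff : x = -x - k ↔ k = -x - x := by
        constructor <;> intro h <;> linear_combination h
      rw [if_congr hiff rfl rfl]
      split <;> norm_num
    rw [Finset.sum_congr rfl (fun k _ => h1 k), Finset.sum_sub_distrib, Finset.sum_const,
      Finset.card_univ, Finset.sum_ite_eq' univ (-x - x) (fun _ => (1:ℝ))]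
    simp
  have hsum : ∑ k : F, shannon (fun x : F => x ^ 2 + k * x)
      = (Fintype.card F : ℝ) * Real.logb 2 (Fintype.card F) - ((Fintype.card F : ℝ) - 1) := by
    rw [Finset.sum_congr rfl (fun k _ => shannon_g k), Finset.sum_sub_distrib,
      Finset.sum_const, Finset.card_univ, nsmul_eq_mul, ← Finset.mul_sum, Finset.sum_comm,
      Finset.sum_congr rfl (fun x _ => inner x), Finset.sum_const, Finset.card_univ,
      nsmul_eq_mul]
    field_simp
  rw [hsum]
  field_simp
end

section
/- Let q be a prime power, n ≥ 1, f(x) := (x_1^2, ..., x_n^2), g_k(x) := f(x) + (k_1 x_1, ..., k_n x_n), and A uniform on F_q^n. Then (1/q^n) Σ_{k ∈ F_q^n} H(g_k(A)) = log_2(q^n) - n(1 - 1/q). -/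
open Finset

lemma shannon_eq {α β : Type*} [Fintype α] [Fintype β] [DecidableEq β] [Nonempty α]
    (g : α → β) :
    shannon g = Real.logb 2 (Fintype.card α) -
      (1 / (Fintype.card α : ℝ)) *
        ∑ x : α, Real.logb 2 ((Finset.univ.filter fun x' => g x' = g x).card) := by
  have hN : (0:ℝ) < (Fintype.card α : ℝ) := by
    exact_mod_cast Fintype.card_pos
  set N : ℝ := (Fintype.card α : ℝ) with hNdef
  have hsumc : ∑ y : β, ((Finset.univ.filter fun x => g x = y).card : ℝ) = N := by
    rw [hNdef, ← Nat.cast_sum]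
    norm_cast
    rw [← Finset.card_univ]
    exact (Finset.card_eq_sum_card_fiberwise (fun x _ => Finset.mem_univ (g x))).symm
  have hfib : ∑ x : α, Real.logb 2 ((Finset.univ.filter fun x' => g x' = g x).card)
      = ∑ y : β, ((Finset.univ.filter fun x => g x = y).card : ℝ) *
          Real.logb 2 ((Finset.univ.filter fun x => g x = y).card) := by
    rw [← Finset.sum_fiberwise_of_maps_to (g := g) (fun x _ => Finset.mem_univ (g x))
      (f := fun x => Real.logb 2 ((Finset.univ.filter fun x' => g x' = g x).card))]
    refine Finset.sum_congr rfl fun y _ => ?_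
    rw [Finset.sum_congr rfl (fun x hx => ?_), Finset.sum_const, nsmul_eq_mul]
    rw [(Finset.mem_filter.mp hx).2]
  have key : ∀ y : β, mass g y * Real.logb 2 (mass g y)
      = ((Finset.univ.filter fun x => g x = y).card : ℝ) / N *
          Real.logb 2 ((Finset.univ.filter fun x => g x = y).card)
        - ((Finset.univ.filter fun x => g x = y).card : ℝ) / N * Real.logb 2 N := by
    intro y
    rcases eq_or_ne ((Finset.univ.filter fun x => g x = y).card : ℝ) 0 with h | h
    · simp [mass, h, hNdef]
    · have : mass g y = ((Finset.univ.filter fun x => g x = y).card : ℝ) / N := rfl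
      rw [this, Real.logb_div h (ne_of_gt hN)]
      ring
  unfold shannon
  rw [Finset.sum_congr rfl (fun y _ => key y), Finset.sum_sub_distrib]
  have h1 : ∑ y : β, ((Finset.univ.filter fun x => g x = y).card : ℝ) / N *
      Real.logb 2 ((Finset.univ.filter fun x => g x = y).card)
      = (1/N) * ∑ y : β, ((Finset.univ.filter fun x => g x = y).card : ℝ) *
          Real.logb 2 ((Finset.univ.filter fun x => g x = y).card) := by
    rw [Finset.mul_sum]
    exact Finset.sum_congr rfl fun y _ => by ring
  have h2 : ∑ y : β, ((Finset.univ.filter fun x => g x = y).card : ℝ) / N * Real.logb 2 N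
      = Real.logb 2 N := by
    rw [← Finset.sum_mul, ← Finset.sum_div, hsumc, div_self (ne_of_gt hN), one_mul]
  rw [h1, h2, hfib]
  ring

lemma quad_iff {F : Type*} [Field F] (a b c : F) :
    a ^ 2 + c * a = b ^ 2 + c * b ↔ a = b ∨ a = -b - c := by
  rw [← sub_eq_zero (a := a ^ 2 + c * a)]
  constructor
  · intro h
    have h2 : (a - b) * (a + b + c) = 0 := by linear_combination h
    rcases mul_eq_zero.mp h2 with h3 | h3
    · left; exact sub_eq_zero.mp h3
    · right; linear_combination h3
  · rintro (rfl | rfl) <;> ring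

-- fiber card
lemma fiber_card {n : ℕ} {F : Type*} [Field F] [Fintype F] [DecidableEq F]
    (k x : Fin n → F) :
    ((Finset.univ.filter fun x' : Fin n → F =>
        (fun i => x' i ^ 2 + k i * x' i) = (fun i => x i ^ 2 + k i * x i)).card : ℕ)
      = 2 ^ (Finset.univ.filter fun i : Fin n => ¬ (-x i - k i = x i)).card := by
  have hset : (Finset.univ.filter fun x' : Fin n → F =>
        (fun i => x' i ^ 2 + k i * x' i) = (fun i => x i ^ 2 + k i * x i))
      = Fintype.piFinset (fun i => ({x i, -x i - k i} : Finset F)) := by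
    ext x'
    simp only [Finset.mem_filter, Finset.mem_univ, true_and, Fintype.mem_piFinset,
      Finset.mem_insert, Finset.mem_singleton, funext_iff]
    exact forall_congr' fun i => quad_iff (x' i) (x i) (k i)
  rw [hset, Fintype.card_piFinset]
  have : ∀ i : Fin n, ({x i, -x i - k i} : Finset F).card
      = if -x i - k i = x i then 1 else 2 := by
    intro i
    split_ifs with h
    · rw [h]; simp
    · exact Finset.card_pair (fun hh => h hh.symm)
  rw [Finset.prod_congr rfl (fun i _ => this i), Finset.prod_ite]
  simp [Finset.prod_const]

-- sum over functions of f (k i)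
lemma sum_eval {n : ℕ} {F : Type*} [Fintype F] [DecidableEq F] (i : Fin n) (f : F → ℝ) :
    ∑ k : Fin n → F, f (k i) = (Fintype.card F : ℝ) ^ (n - 1) * ∑ a : F, f a := by
  have h1 := Fintype.sum_equiv (Equiv.piSplitAt i (fun _ => F)) (fun k => f (k i))
    (fun p => f p.1) (fun k => rfl)
  rw [h1, Fintype.sum_prod_type]
  simp only [Finset.sum_const, Finset.card_univ, nsmul_eq_mul, ← Finset.sum_mul]
  rw [Fintype.card_fun]
  have hcard : Fintype.card {j : Fin n // j ≠ i} = n - 1 := by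
    rw [Fintype.card_subtype_compl, Fintype.card_fin, Fintype.card_subtype_eq]
  rw [hcard, Finset.mul_sum]
  push_cast
  ring

theorem stmt16 (q n : ℕ) (hn : 1 ≤ n) (F : Type*) [Field F] [Fintype F] [DecidableEq F]
    (hq : Fintype.card F = q) :
    (1 / (q : ℝ) ^ n) *
        ∑ k : Fin n → F, shannon (fun x : Fin n → F => fun i => x i ^ 2 + k i * x i) =
      Real.logb 2 ((q : ℝ) ^ n) - n * (1 - 1 / (q : ℝ)) := by
  subst hq
  have hqpos : 0 < Fintype.card F := Fintype.card_pos
  have hq0 : ((Fintype.card F : ℕ) : ℝ) ≠ 0 := by positivity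
  set q : ℕ := Fintype.card F with hqdef
  have hN : (Fintype.card (Fin n → F) : ℝ) = (q : ℝ) ^ n := by
    rw [Fintype.card_fun, Fintype.card_fin]; push_cast; ring
  -- rewrite each shannon term
  have hterm : ∀ k : Fin n → F,
      shannon (fun x : Fin n → F => fun i => x i ^ 2 + k i * x i)
        = Real.logb 2 ((q : ℝ) ^ n) -
          (1 / (q : ℝ) ^ n) * ∑ x : Fin n → F,
            ((Finset.univ.filter fun i : Fin n => ¬ (-x i - k i = x i)).card : ℝ) := by
    intro k
    rw [shannon_eq, hN]
    congr 1
    congr 1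
    refine Finset.sum_congr rfl fun x _ => ?_
    rw [fiber_card k x]
    push_cast
    rw [Real.logb_pow]
    simp [Real.logb_self_eq_one]
  rw [Finset.sum_congr rfl (fun k _ => hterm k), Finset.sum_sub_distrib,
    Finset.sum_const, Finset.card_univ, Fintype.card_fun, Fintype.card_fin]
  -- the double sum
  have hdouble : ∑ k : Fin n → F, (1 / (q : ℝ) ^ n) * ∑ x : Fin n → F,
      ((Finset.univ.filter fun i : Fin n => ¬ (-x i - k i = x i)).card : ℝ)
      = (n : ℝ) * ((q : ℝ) ^ (n - 1) * ((q : ℝ) - 1)) := by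
    have hpow0 : ((q:ℝ))^n ≠ 0 := by positivity
    rw [← Finset.mul_sum, Finset.sum_comm]
    have hx : ∀ x : Fin n → F, ∑ k : Fin n → F,
        ((Finset.univ.filter fun i : Fin n => ¬ (-x i - k i = x i)).card : ℝ)
        = (n : ℝ) * ((q : ℝ) ^ (n - 1) * ((q : ℝ) - 1)) := by
      intro x
      have hcard : ∀ k : Fin n → F,
          ((Finset.univ.filter fun i : Fin n => ¬ (-x i - k i = x i)).card : ℝ)
          = ∑ i : Fin n, (if -x i - k i = x i then (0:ℝ) else 1) := by
        intro k
        rw [Finset.card_filter]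
        push_cast
        refine Finset.sum_congr rfl fun i _ => ?_
        split_ifs with h <;> simp
      rw [Finset.sum_congr rfl (fun k _ => hcard k), Finset.sum_comm]
      have hi : ∀ i : Fin n, ∑ k : Fin n → F, (if -x i - k i = x i then (0:ℝ) else 1)
          = (q : ℝ) ^ (n - 1) * ((q : ℝ) - 1) := by
        intro i
        rw [sum_eval i (fun a => if -x i - a = x i then (0:ℝ) else 1)]
        congr 1
        have ha : ∀ a : F, (if -x i - a = x i then (0:ℝ) else 1)
            = 1 - (if a = -x i - x i then (1:ℝ) else 0) := by
          intro a
          have hiff : (-x i - a = x i) ↔ (a = -x i - x i) := by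
            constructor <;> intro h <;> linear_combination -h
          by_cases h : -x i - a = x i
          · rw [if_pos h, if_pos (hiff.mp h)]; ring
          · rw [if_neg h, if_neg (fun hh => h (hiff.mpr hh))]; ring
        rw [Finset.sum_congr rfl (fun a _ => ha a), Finset.sum_sub_distrib,
          Finset.sum_const, Finset.card_univ, Finset.sum_ite_eq' Finset.univ]
        simp [hqdef]
      rw [Finset.sum_congr rfl (fun i _ => hi i), Finset.sum_const, Finset.card_univ,
        Fintype.card_fin, nsmul_eq_mul]
    rw [Finset.sum_congr rfl (fun x _ => hx x), Finset.sum_const, Finset.card_univ,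
      Fintype.card_fun, Fintype.card_fin, nsmul_eq_mul]
    push_cast
    field_simp
    rfl
  rw [hdouble]
  have hqpow : (q : ℝ) ^ n = (q : ℝ) ^ (n - 1) * (q : ℝ) := by
    rw [← pow_succ, Nat.sub_add_cancel hn]
  have hpow0 : ((q:ℝ))^n ≠ 0 := by positivity
  rw [nsmul_eq_mul]
  push_cast
  field_simp
  rw [hqpow]
  ring_nf
end

section
/- Let q be an odd prime power, n ≥ 1, f(x) := (x_1^2, ..., x_n^2), g_k(x) := f(x) + (k_1 x_1, ..., k_n x_n), and A uniform on F_q^n. Then for every k ∈ F_q^n, H_2(g_k(A)) = log_2(q^n) - n·log_2(2 - 1/q); in particular the average Rényi entropy attains the lower bound of the main theorem. -/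
open Finset

/-- Sum of squared fiber sizes equals the number of collision pairs,
computed fiberwise. -/
lemma sum_sq_fiber {α β : Type*} [Fintype α] [Fintype β] [DecidableEq β] (g : α → β) :
    ∑ y : β, ((Finset.univ.filter fun x => g x = y).card : ℝ) ^ 2
      = ∑ a : α, ((Finset.univ.filter fun x => g x = g a).card : ℝ) := by
  have h := Finset.sum_fiberwise (Finset.univ : Finset α) g
    (fun a => ((Finset.univ.filter fun x => g x = g a).card : ℝ))
  rw [← h]
  refine Finset.sum_congr rfl fun y _ => ?_
  rw [Finset.sum_congr rfl (fun a ha => ?_), Finset.sum_const, nsmul_eq_mul, sq]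
  have hga : g a = y := (Finset.mem_filter.mp ha).2
  rw [hga]

/-- The fiber of a single-coordinate quadratic map. -/
lemma fiber_quad {F : Type*} [Field F] [DecidableEq F] [Fintype F] (c a : F) :
    (Finset.univ.filter fun b : F => b ^ 2 + c * b = a ^ 2 + c * a) = {a, -a - c} := by
  ext b
  simp only [mem_filter, mem_univ, true_and, mem_insert, mem_singleton]
  constructor
  · intro h
    have h0 : (b - a) * (b + a + c) = 0 := by linear_combination h
    rcases mul_eq_zero.mp h0 with h1 | h1
    · exact Or.inl (sub_eq_zero.mp h1)
    · right; linear_combination h1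
  · rintro (rfl | rfl) <;> ring

lemma card_fiber_quad {F : Type*} [Field F] [DecidableEq F] [Fintype F] (c a : F) :
    (((Finset.univ.filter fun b : F => b ^ 2 + c * b = a ^ 2 + c * a).card : ℝ))
      = 2 - (if 2 * a + c = 0 then 1 else 0) := by
  rw [fiber_quad]
  by_cases h : 2 * a + c = 0
  · have hx : -a - c = a := by linear_combination -h
    rw [hx, if_pos h]
    have hs : ({a, a} : Finset F) = {a} := by simp
    rw [hs, Finset.card_singleton]
    norm_num
  · have hne : a ≠ -a - c := fun h' => h (by linear_combination h')
    rw [Finset.card_pair hne, if_neg h]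
    norm_num

lemma sum_card_fiber_quad {F : Type*} [Field F] [DecidableEq F] [Fintype F]
    (h2 : (2 : F) ≠ 0) (c : F) :
    ∑ a : F, (((Finset.univ.filter fun b : F => b ^ 2 + c * b = a ^ 2 + c * a).card : ℝ))
      = 2 * (Fintype.card F : ℝ) - 1 := by
  have hc2 : (2 : F) * (c / 2) = c := by
    rw [mul_comm, div_mul_cancel₀ _ h2]
  have hset : (Finset.univ.filter fun a : F => 2 * a + c = 0) = {-(c / 2)} := by
    ext a
    simp only [Finset.mem_filter, Finset.mem_univ, true_and, Finset.mem_singleton]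
    constructor
    · intro ha
      have : (2 : F) * a = 2 * (-(c / 2)) := by
        rw [mul_neg, hc2]; linear_combination ha
      exact mul_left_cancel₀ h2 this
    · intro ha
      rw [ha, mul_neg, hc2]; ring
  have hone : ∑ a : F, (if 2 * a + c = 0 then (1 : ℝ) else 0) = 1 := by
    rw [← Finset.sum_filter, hset]
    simp
  rw [Finset.sum_congr rfl fun a _ => card_fiber_quad c a, Finset.sum_sub_distrib,
    Finset.sum_const, hone]
  simp [mul_comm]

theorem stmt17 (q n : ℕ) (hn : 1 ≤ n) (F : Type*) [Field F] [Fintype F] [DecidableEq F]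
    (hq : Fintype.card F = q) (hodd : Odd q) (k : Fin n → F) :
    renyi2 (fun x : Fin n → F => fun i => x i ^ 2 + k i * x i) =
      Real.logb 2 ((q : ℝ) ^ n) - n * Real.logb 2 (2 - 1 / (q : ℝ)) := by
  -- basic numeric facts
  have hq2 : 2 ≤ q := by rw [← hq]; exact Fintype.one_lt_card
  have hqR : (0 : ℝ) < (q : ℝ) := by positivity
  have hqR' : (q : ℝ) ≠ 0 := ne_of_gt hqR
  have hcoll_pos : (0 : ℝ) < 2 * (q : ℝ) - 1 := by
    have : (2 : ℝ) ≤ (q : ℝ) := by exact_mod_cast hq2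
    linarith
  -- characteristic is odd, so 2 ≠ 0 in F
  have h2 : (2 : F) ≠ 0 := by
    refine Ring.two_ne_zero ?_
    intro hchar
    have := FiniteField.even_card_of_char_two hchar
    rw [hq] at this
    rcases hodd with ⟨m, hm⟩
    omega
  set g : (Fin n → F) → (Fin n → F) := fun x => fun i => x i ^ 2 + k i * x i with hg
  -- compute the collision probability
  have hcard : (Fintype.card (Fin n → F) : ℝ) = (q : ℝ) ^ n := by
    rw [Fintype.card_fun, Fintype.card_fin, hq]; push_cast; ring
  have hfiber : ∀ a : Fin n → F,
      (Finset.univ.filter fun x => g x = g a)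
        = Fintype.piFinset (fun i => Finset.univ.filter
            fun b : F => b ^ 2 + k i * b = (a i) ^ 2 + k i * (a i)) := by
    intro a
    ext x
    simp [hg, Fintype.mem_piFinset, funext_iff]
  set f : Fin n → F → ℝ := fun i t =>
    ((Finset.univ.filter fun b : F => b ^ 2 + k i * b = t ^ 2 + k i * t).card : ℝ) with hf
  have hsum : ∑ a : Fin n → F, ((Finset.univ.filter fun x => g x = g a).card : ℝ)
      = (2 * (q : ℝ) - 1) ^ n := by
    have hprod : ∀ a : Fin n → F, ((Finset.univ.filter fun x => g x = g a).card : ℝ)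
        = ∏ i : Fin n, f i (a i) := by
      intro a
      rw [hfiber a, Fintype.card_piFinset]
      push_cast
      rfl
    have hps := Finset.prod_univ_sum (fun _ : Fin n => (Finset.univ : Finset F)) f
    rw [Fintype.piFinset_univ] at hps
    rw [Finset.sum_congr rfl fun a _ => hprod a, ← hps]
    rw [Finset.prod_congr rfl fun i _ => sum_card_fiber_quad h2 (k i)]
    rw [Finset.prod_const, hq, Finset.card_univ, Fintype.card_fin]
  have hcoll : collProb g = (2 * (q : ℝ) - 1) ^ n / ((q : ℝ) ^ n) ^ 2 := by
    unfold collProb mass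
    rw [Finset.sum_congr rfl fun y _ => div_pow _ _ 2, ← Finset.sum_div,
      sum_sq_fiber g, hsum, hcard]
  -- take logarithms
  rw [renyi2, hcoll]
  have h21q : (2 : ℝ) - 1 / (q : ℝ) = (2 * (q : ℝ) - 1) / (q : ℝ) := by
    field_simp
  rw [h21q, Real.logb_div hcoll_pos.ne' hqR',
    Real.logb_div (by positivity) (by positivity),
    Real.logb_pow, Real.logb_pow, Real.logb_pow]
  ring
end

section
/- Let q be a power of 2, n ≥ 1, f(x) := (x_1^2, ..., x_n^2), g_k(x) := f(x) + (k_1 x_1, ..., k_n x_n), and A uniform on F_q^n. Then for every k ∈ F_q^n, CP(g_k(A)) = 2^{w(k)}/q^n, where w(k) is the Hamming weight of k; consequently the average Rényi entropy over k equals log_2(q^n) - n(1 - 1/q). -/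
open Finset

section Aux

variable {F : Type*} [Field F] [Fintype F] [DecidableEq F]

lemma aux_coord_sum (hchar : CharP F 2) (c : F) :
    ∑ y : F, ((univ.filter (fun a : F => a ^ 2 + c * a = y)).card) ^ 2
      = (if c = 0 then 1 else 2) * Fintype.card F := by
  have hfib : Fintype.card F
      = ∑ y : F, (univ.filter (fun a : F => a ^ 2 + c * a = y)).card := by
    simpa using Finset.card_eq_sum_card_fiberwise
      (f := fun a : F => a ^ 2 + c * a) (s := univ) (t := univ) (fun x _ => mem_univ _)
  by_cases hc : c = 0
  · subst hc
    rw [if_pos rfl, one_mul, hfib]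
    apply Finset.sum_congr rfl
    intro y _
    have hle : (univ.filter (fun a : F => a ^ 2 + 0 * a = y)).card ≤ 1 := by
      apply Finset.card_le_one.2
      intro a ha b hb
      simp only [mem_filter, zero_mul, add_zero] at ha hb
      have h1 : (a + b) ^ 2 = 0 := by
        rw [CharTwo.add_sq, ha.2, hb.2, CharTwo.add_self_eq_zero]
      have h2 : a + b = 0 := by
        exact pow_eq_zero_iff (n := 2) (by norm_num) |>.mp h1
      have := CharTwo.add_eq_iff_eq_add.mp h2
      simpa using this
    interval_cases h : (univ.filter (fun a : F => a ^ 2 + 0 * a = y)).card <;> simp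
  · rw [if_neg hc]
    have key : ∀ y : F, ((univ.filter (fun a : F => a ^ 2 + c * a = y)).card) ^ 2
        = 2 * (univ.filter (fun a : F => a ^ 2 + c * a = y)).card := by
      intro y
      rcases (univ.filter (fun a : F => a ^ 2 + c * a = y)).eq_empty_or_nonempty with h | ⟨a, ha⟩
      · simp [h]
      · have ha' : a ^ 2 + c * a = y := (mem_filter.mp ha).2
        have hset : univ.filter (fun b : F => b ^ 2 + c * b = y) = {a, a + c} := by
          ext b
          simp only [mem_filter, mem_univ, true_and, mem_insert, mem_singleton]
          constructor
          · intro hb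
            have h0 : (b + a) * (b + a + c) = 0 := by
              have hr : (b + a) * (b + a + c)
                  = (b ^ 2 + c * b) + (a ^ 2 + c * a) + 2 * (a * b) := by ring
              rw [hr, hb, ha', CharTwo.two_eq_zero, zero_mul, add_zero,
                CharTwo.add_self_eq_zero]
            rcases mul_eq_zero.mp h0 with h1 | h1
            · left
              have := CharTwo.add_eq_iff_eq_add.mp h1
              simpa using this
            · right
              rw [add_assoc] at h1
              have := CharTwo.add_eq_iff_eq_add.mp h1
              simpa using this
          · rintro (rfl | rfl)
            · exact ha'
            · have hr : (a + c) ^ 2 + c * (a + c)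
                  = (a ^ 2 + c * a) + 2 * (a * c + c ^ 2) := by ring
              rw [hr, ha', CharTwo.two_eq_zero, zero_mul, add_zero]
        rw [hset, Finset.card_pair (fun h => hc (left_eq_add.mp h))]
        norm_num
    calc ∑ y : F, ((univ.filter (fun a : F => a ^ 2 + c * a = y)).card) ^ 2
        = ∑ y : F, 2 * (univ.filter (fun a : F => a ^ 2 + c * a = y)).card :=
          Finset.sum_congr rfl (fun y _ => key y)
      _ = 2 * ∑ y : F, (univ.filter (fun a : F => a ^ 2 + c * a = y)).card := by
          rw [Finset.mul_sum]
      _ = 2 * Fintype.card F := by rw [← hfib]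

lemma aux_collProb_coord (hchar : CharP F 2) (c : F) :
    collProb (fun a : F => a ^ 2 + c * a)
      = (if c = 0 then (1 : ℝ) else 2) / (Fintype.card F : ℝ) := by
  have hq0 : (0 : ℝ) < (Fintype.card F : ℝ) := by
    exact_mod_cast Fintype.card_pos
  have hcast := congrArg (Nat.cast : ℕ → ℝ) (aux_coord_sum hchar c)
  push_cast [apply_ite (Nat.cast : ℕ → ℝ)] at hcast
  unfold collProb mass
  simp only [div_pow]
  rw [← Finset.sum_div, hcast, sq, mul_div_mul_right _ _ hq0.ne']

lemma aux_mass_pi {n : ℕ} (k : Fin n → F) (y : Fin n → F) :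
    mass (fun x : Fin n → F => fun i => x i ^ 2 + k i * x i) y
      = ∏ i, mass (fun a : F => a ^ 2 + k i * a) (y i) := by
  unfold mass
  rw [Finset.prod_div_distrib]
  congr 1
  · have hset : (univ.filter (fun x : Fin n → F => (fun i => x i ^ 2 + k i * x i) = y))
        = Fintype.piFinset (fun i => univ.filter (fun a : F => a ^ 2 + k i * a = y i)) := by
      ext x
      simp [Fintype.mem_piFinset, funext_iff]
    rw [hset, Fintype.card_piFinset]
    push_cast
    rfl
  · rw [Fintype.card_pi]
    push_cast
    rfl

lemma aux_collProb_pi {n : ℕ} (k : Fin n → F) :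
    collProb (fun x : Fin n → F => fun i => x i ^ 2 + k i * x i)
      = ∏ i, collProb (fun a : F => a ^ 2 + k i * a) := by
  unfold collProb
  rw [Finset.prod_univ_sum (fun _ => univ) (fun i a => mass (fun b : F => b ^ 2 + k i * b) a ^ 2),
    Fintype.piFinset_univ]
  apply Finset.sum_congr rfl
  intro y _
  rw [aux_mass_pi, ← Finset.prod_pow]

end Aux

theorem stmt18 (q m n : ℕ) (hq2 : q = 2 ^ m) (hn : 1 ≤ n)
    (F : Type*) [Field F] [Fintype F] [DecidableEq F]
    (hq : Fintype.card F = q) :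
    (∀ k : Fin n → F,
        collProb (fun x : Fin n → F => fun i => x i ^ 2 + k i * x i) =
          (2 : ℝ) ^ hammingNorm k / (q : ℝ) ^ n) ∧
      (1 / (q : ℝ) ^ n) *
          ∑ k : Fin n → F, renyi2 (fun x : Fin n → F => fun i => x i ^ 2 + k i * x i) =
        Real.logb 2 ((q : ℝ) ^ n) - n * (1 - 1 / (q : ℝ)) := by
  have hF2 : 2 ≤ Fintype.card F := Fintype.one_lt_card
  have hq2' : 2 ≤ q := hq ▸ hF2
  have hm : m ≠ 0 := by
    rintro rfl
    rw [pow_zero] at hq2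
    omega
  have hchar : CharP F 2 := by
    have hrc : ringChar F = 2 := by
      rw [FiniteField.even_card_iff_char_two, hq, hq2]
      obtain ⟨t, ht⟩ := dvd_pow_self 2 hm
      rw [ht]
      exact Nat.mul_mod_right 2 t
    exact ringChar.of_eq hrc
  have hqR : (0 : ℝ) < (q : ℝ) := by exact_mod_cast (by omega : 0 < q)
  have hqRn : (0 : ℝ) < (q : ℝ) ^ n := by positivity
  -- the collision probability formula
  have part1 : ∀ k : Fin n → F,
      collProb (fun x : Fin n → F => fun i => x i ^ 2 + k i * x i) =
        (2 : ℝ) ^ hammingNorm k / (q : ℝ) ^ n := by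
    intro k
    rw [aux_collProb_pi k]
    have hcoord : ∀ i ∈ univ, collProb (fun a : F => a ^ 2 + k i * a)
        = (if k i = 0 then (1 : ℝ) else 2) / (q : ℝ) := by
      intro i _
      rw [aux_collProb_coord hchar (k i), hq]
    rw [Finset.prod_congr rfl hcoord, Finset.prod_div_distrib, Finset.prod_const,
      card_univ, Fintype.card_fin]
    congr 1
    rw [Finset.prod_ite, Finset.prod_const, Finset.prod_const, one_pow, one_mul]
    congr 1
  refine ⟨part1, ?_⟩
  -- value of the Rényi entropy
  have hren : ∀ k : Fin n → F,
      renyi2 (fun x : Fin n → F => fun i => x i ^ 2 + k i * x i)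
        = Real.logb 2 ((q : ℝ) ^ n) - (hammingNorm k : ℝ) := by
    intro k
    unfold renyi2
    rw [part1 k, Real.logb_div (by positivity) (by positivity), Real.logb_pow,
      Real.logb_self_eq_one (by norm_num : (1:ℝ) < 2)]
    ring
  rw [Finset.sum_congr rfl (fun k _ => hren k), Finset.sum_sub_distrib, Finset.sum_const,
    card_univ]
  have hcardpi : Fintype.card (Fin n → F) = q ^ n := by
    rw [Fintype.card_fun, hq, Fintype.card_fin]
  -- sum of Hamming norms
  have hsumw : ∑ k : Fin n → F, (hammingNorm k : ℝ) = n * (((q : ℝ) - 1) * (q : ℝ) ^ (n - 1)) := by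
    have step1 : ∀ k : Fin n → F,
        (hammingNorm k : ℝ) = ∑ i : Fin n, (if k i = 0 then (0 : ℝ) else 1) := by
      intro k
      have : ∀ i : Fin n, (if k i = 0 then (0 : ℝ) else 1) = (if k i ≠ 0 then (1 : ℝ) else 0) := by
        intro i; by_cases h : k i = 0 <;> simp [h]
      rw [Finset.sum_congr rfl (fun i _ => this i), Finset.sum_boole]
      simp [hammingNorm, Ne]
    rw [Finset.sum_congr rfl (fun k _ => step1 k), Finset.sum_comm]
    have step2 : ∀ i : Fin n,
        ∑ k : Fin n → F, (if k i = 0 then (0 : ℝ) else 1)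
          = ((q : ℝ) - 1) * (q : ℝ) ^ (n - 1) := by
      intro i
      have hrepr : ∀ k : Fin n → F, (if k i = 0 then (0 : ℝ) else 1)
          = ∏ j : Fin n, (if j = i then (if k j = 0 then (0 : ℝ) else 1) else 1) := by
        intro k
        rw [Finset.prod_ite_eq' univ i (fun j => if k j = 0 then (0 : ℝ) else 1)]
        simp
      rw [Finset.sum_congr rfl (fun k _ => hrepr k), ← Fintype.piFinset_univ,
        ← Finset.prod_univ_sum (fun _ : Fin n => (univ : Finset F))
          (fun j a => if j = i then (if a = 0 then (0 : ℝ) else 1) else 1)]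
      have hfac : ∀ j ∈ (univ : Finset (Fin n)),
          (∑ a : F, (if j = i then (if a = 0 then (0 : ℝ) else 1) else 1))
            = (if j = i then (q : ℝ) - 1 else (q : ℝ)) := by
        intro j _
        by_cases hj : j = i
        · simp only [hj, eq_self_iff_true, if_true]
          have : ∀ a : F, (if a = 0 then (0 : ℝ) else 1)
              = 1 - (if a = 0 then (1 : ℝ) else 0) := by
            intro a; by_cases h : a = 0 <;> simp [h]
          rw [Finset.sum_congr rfl (fun a _ => this a), Finset.sum_sub_distrib,
            Finset.sum_const, Finset.sum_ite_eq' univ (0 : F) (fun _ => (1 : ℝ))]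
          simp [hq]
        · simp [hj, hq]
      rw [Finset.prod_congr rfl hfac, ← Finset.mul_prod_erase univ _ (mem_univ i), if_pos rfl]
      congr 1
      have : ∀ j ∈ univ.erase i, (if j = i then (q : ℝ) - 1 else (q : ℝ)) = (q : ℝ) := by
        intro j hj
        rw [if_neg (Finset.mem_erase.mp hj).1]
      rw [Finset.prod_congr rfl this, Finset.prod_const, Finset.card_erase_of_mem (mem_univ i),
        card_univ, Fintype.card_fin]
    rw [Finset.sum_congr rfl (fun i _ => step2 i), Finset.sum_const, card_univ, Fintype.card_fin,
      nsmul_eq_mul]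
  rw [hsumw, hcardpi, nsmul_eq_mul]
  have hqne : (q : ℝ) ≠ 0 := hqR.ne'
  have hpow : (q : ℝ) ^ n = (q : ℝ) ^ (n - 1) * (q : ℝ) := by
    rw [← pow_succ, Nat.sub_add_cancel hn]
  set L := Real.logb 2 ((q : ℝ) ^ n) with hL
  push_cast
  rw [hpow]
  field_simp
end
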